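/- arXiv:2103.02920 — 4 statements merged into one kernel-verified Lean document; each statement's English description precedes it below -/
import Mathlib

section
/- Let Π be an N×N matrix with nonnegative entries and γ > 1. Define Λ(x) := sup { ∑ᵢ yᵢ + γ ∑ᵢ bᵢ | y ∈ (−∞,0]^N, b ∈ (−∞,0]^N, ∀i: xᵢ ≥ bᵢ + yᵢ − ∑ⱼ Π_{ji} yⱼ }. Then Λ : ℝ^N → ℝ is increasing with respect to the componentwise order, concave, and Λ(0) = 0, provided ∑ⱼ Π_{ji} ≤ 1 for each i. -/
open scoped BigOperators

/-- The Chen–Iyengar–Moallemi network aggregation function: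
`Λ(x) = sup { ∑ᵢ yᵢ + γ ∑ᵢ bᵢ | y, b ∈ (−∞,0]^N, ∀ i : xᵢ ≥ bᵢ + yᵢ − ∑ⱼ Π_{ji} yⱼ }`. -/
noncomputable def lambdaNetwork {N : ℕ} (P : Fin N → Fin N → ℝ) (γ : ℝ)
    (x : Fin N → ℝ) : ℝ :=
  sSup {s : ℝ | ∃ y b : Fin N → ℝ, (∀ i, y i ≤ 0) ∧ (∀ i, b i ≤ 0) ∧
    (∀ i, b i + y i - ∑ j, P j i * y j ≤ x i) ∧ s = (∑ i, y i) + γ * ∑ i, b i}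

/-- The feasible-value set defining `lambdaNetwork`. -/
def lamSet {N : ℕ} (P : Fin N → Fin N → ℝ) (γ : ℝ) (x : Fin N → ℝ) : Set ℝ :=
  {s : ℝ | ∃ y b : Fin N → ℝ, (∀ i, y i ≤ 0) ∧ (∀ i, b i ≤ 0) ∧
    (∀ i, b i + y i - ∑ j, P j i * y j ≤ x i) ∧ s = (∑ i, y i) + γ * ∑ i, b i}

lemma lambdaNetwork_eq {N : ℕ} (P : Fin N → Fin N → ℝ) (γ : ℝ) (x : Fin N → ℝ) :
    lambdaNetwork P γ x = sSup (lamSet P γ x) := rfl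

lemma lamSet_nonempty {N : ℕ} (P : Fin N → Fin N → ℝ) (γ : ℝ) (x : Fin N → ℝ) :
    (lamSet P γ x).Nonempty := by
  refine ⟨0 + γ * ∑ i, min (x i) 0, 0, fun i => min (x i) 0, fun i => le_refl 0,
    fun i => min_le_right _ _, fun i => ?_, by simp⟩
  simp [min_le_left]

lemma lamSet_le_bound {N : ℕ} {P : Fin N → Fin N → ℝ} {γ : ℝ}
    (hP : ∀ j i, 0 ≤ P j i) (hγ : 1 < γ) (x : Fin N → ℝ) :
    ∀ s ∈ lamSet P γ x, s ≤ ∑ i, x i := by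
  rintro s ⟨y, b, hy, hb, hc, rfl⟩
  have hbsum : (∑ i, b i) ≤ 0 := Finset.sum_nonpos fun i _ => hb i
  have h1 : γ * ∑ i, b i ≤ 1 * ∑ i, b i :=
    mul_le_mul_of_nonpos_right hγ.le hbsum
  have h2 : ∀ i, y i + b i ≤ x i := by
    intro i
    have hT : (∑ j, P j i * y j) ≤ 0 :=
      Finset.sum_nonpos fun j _ => mul_nonpos_of_nonneg_of_nonpos (hP j i) (hy j)
    have := hc i
    linarith
  calc (∑ i, y i) + γ * ∑ i, b i ≤ (∑ i, y i) + ∑ i, b i := by linarith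
    _ = ∑ i, (y i + b i) := (Finset.sum_add_distrib).symm
    _ ≤ ∑ i, x i := Finset.sum_le_sum fun i _ => h2 i

lemma lamSet_bddAbove {N : ℕ} {P : Fin N → Fin N → ℝ} {γ : ℝ}
    (hP : ∀ j i, 0 ≤ P j i) (hγ : 1 < γ) (x : Fin N → ℝ) :
    BddAbove (lamSet P γ x) :=
  ⟨∑ i, x i, fun s hs => lamSet_le_bound hP hγ x s hs⟩

lemma lamSet_mono {N : ℕ} (P : Fin N → Fin N → ℝ) (γ : ℝ) {x x' : Fin N → ℝ}
    (h : x ≤ x') : lamSet P γ x ⊆ lamSet P γ x' := by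
  rintro s ⟨y, b, hy, hb, hc, rfl⟩
  exact ⟨y, b, hy, hb, fun i => (hc i).trans (h i), rfl⟩


lemma mul_csSup_le_of_forall {S : Set ℝ} {c M : ℝ} (hc : 0 ≤ c)
    (hne : S.Nonempty) (h : ∀ s ∈ S, c * s ≤ M) : c * sSup S ≤ M := by
  rcases hc.eq_or_lt with rfl | hc'
  · obtain ⟨s, hs⟩ := hne
    simpa using h s hs
  · rw [mul_comm, ← le_div_iff₀ hc']
    refine csSup_le hne fun s hs => ?_
    rw [le_div_iff₀ hc']
    simpa [mul_comm] using h s hs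

/-- the network aggregation function is increasing (componentwise
order), concave and satisfies Λ(0) = 0, provided Π has nonnegative entries,
γ > 1 and ∑ⱼ Π_{ji} ≤ 1 for each i. -/
theorem stmt_6 {N : ℕ} (P : Fin N → Fin N → ℝ) (γ : ℝ)
    (hP : ∀ j i, 0 ≤ P j i) (hγ : 1 < γ) (hcol : ∀ i, ∑ j, P j i ≤ 1) :
    Monotone (lambdaNetwork P γ) ∧ ConcaveOn ℝ Set.univ (lambdaNetwork P γ) ∧
      lambdaNetwork P γ 0 = 0 := by
  refine ⟨?_, ?_, ?_⟩
  · intro x x' h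
    exact csSup_le_csSup (lamSet_bddAbove hP hγ x') (lamSet_nonempty P γ x)
      (lamSet_mono P γ h)
  · refine ⟨convex_univ, ?_⟩
    intro x1 _ x2 _ a c ha hc hac
    have key : ∀ s1 ∈ lamSet P γ x1, ∀ s2 ∈ lamSet P γ x2,
        a * s1 + c * s2 ∈ lamSet P γ (a • x1 + c • x2) := by
      rintro _ ⟨y1, b1, hy1, hb1, hc1, rfl⟩ _ ⟨y2, b2, hy2, hb2, hc2, rfl⟩
      refine ⟨fun i => a * y1 i + c * y2 i, fun i => a * b1 i + c * b2 i,
        fun i => add_nonpos (mul_nonpos_of_nonneg_of_nonpos ha (hy1 i))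
          (mul_nonpos_of_nonneg_of_nonpos hc (hy2 i)),
        fun i => add_nonpos (mul_nonpos_of_nonneg_of_nonpos ha (hb1 i))
          (mul_nonpos_of_nonneg_of_nonpos hc (hb2 i)), fun i => ?_, ?_⟩
      · have e : (∑ j, P j i * (a * y1 j + c * y2 j)) =
            a * (∑ j, P j i * y1 j) + c * (∑ j, P j i * y2 j) := by
          rw [Finset.mul_sum, Finset.mul_sum, ← Finset.sum_add_distrib]
          exact Finset.sum_congr rfl fun j _ => by ring
        have h1 := mul_le_mul_of_nonneg_left (hc1 i) ha
        have h2 := mul_le_mul_of_nonneg_left (hc2 i) hc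
        simp only [Pi.add_apply, Pi.smul_apply, smul_eq_mul]
        rw [e]
        linarith
      · rw [Finset.sum_add_distrib, Finset.sum_add_distrib,
          ← Finset.mul_sum, ← Finset.mul_sum, ← Finset.mul_sum, ← Finset.mul_sum]
        ring
    -- now conclude
    have hb3 := lamSet_bddAbove hP hγ (a • x1 + c • x2)
    have hn1 := lamSet_nonempty P γ x1
    have hn2 := lamSet_nonempty P γ x2
    simp only [smul_eq_mul, lambdaNetwork_eq]
    have main : a * sSup (lamSet P γ x1) ≤
        sSup (lamSet P γ (a • x1 + c • x2)) - c * sSup (lamSet P γ x2) := by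
      refine mul_csSup_le_of_forall ha hn1 fun s1 hs1 => ?_
      have h2 : c * sSup (lamSet P γ x2) ≤
          sSup (lamSet P γ (a • x1 + c • x2)) - a * s1 := by
        refine mul_csSup_le_of_forall hc hn2 fun s2 hs2 => ?_
        have := le_csSup hb3 (key s1 hs1 s2 hs2)
        linarith
      linarith
    linarith
  · refine le_antisymm ?_ ?_
    · refine csSup_le (lamSet_nonempty P γ 0) ?_
      intro s hs
      have := lamSet_le_bound hP hγ 0 s hs
      simpa using this
    · refine le_csSup (lamSet_bddAbove hP hγ 0) ?_
      exact ⟨0, 0, fun i => le_refl 0, fun i => le_refl 0, fun i => by simp, by simp⟩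
end

section
/- Let Ψ : C_Z → ℝ be an increasing convex functional on the space C_Z of continuous functions X : Ω → ℝ^N with X/Z componentwise bounded, where Z : Ω → [1,∞) is continuous with compact sublevel sets. Suppose for every n ∈ ℕ, lim_{z→∞} Ψ(n(Z−z)⁺·𝟏) = Ψ(0). Then for every X ∈ C_Z there exists ε > 0 such that lim_{z→∞} Ψ(X + ε(Z−z)⁺·𝟏) = Ψ(X). -/
open Filter Topology

/-- for an increasing convex functional Ψ on C_Z, the tail condition
`lim_{z→∞} Ψ(n(Z−z)⁺·𝟏) = Ψ(0)` for every n implies that for every X ∈ C_Z there is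
ε > 0 with `lim_{z→∞} Ψ(X + ε(Z−z)⁺·𝟏) = Ψ(X)`. -/
theorem stmt_7 {Ω : Type*} [MetricSpace Ω] [Nonempty Ω] {N : ℕ}
    (Z : Ω → ℝ) (hZc : Continuous Z) (hZ1 : ∀ ω, 1 ≤ Z ω)
    (hZcomp : ∀ z : ℝ, IsCompact {ω | Z ω ≤ z})
    (CZ : Set (Ω → Fin N → ℝ))
    (hCZ : CZ = {X : Ω → Fin N → ℝ | Continuous X ∧ ∀ i, ∃ M : ℝ, ∀ ω, |X ω i| ≤ M * Z ω})
    (Ψ : (Ω → Fin N → ℝ) → ℝ)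
    (hmono : ∀ X ∈ CZ, ∀ Y ∈ CZ, (∀ ω, X ω ≤ Y ω) → Ψ X ≤ Ψ Y)
    (hconv : ∀ X ∈ CZ, ∀ Y ∈ CZ, ∀ t : ℝ, 0 ≤ t → t ≤ 1 →
      Ψ (fun ω i => t * X ω i + (1 - t) * Y ω i) ≤ t * Ψ X + (1 - t) * Ψ Y)
    (htail : ∀ n : ℕ, Tendsto (fun z : ℝ => Ψ (fun ω _ => (n : ℝ) * max (Z ω - z) 0))
      atTop (nhds (Ψ 0))) :
    ∀ X ∈ CZ, ∃ ε > (0 : ℝ), Tendsto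
      (fun z : ℝ => Ψ (fun ω i => X ω i + ε * max (Z ω - z) 0)) atTop (nhds (Ψ X)) := by
  subst hCZ
  intro X hX
  obtain ⟨hXc, hXb⟩ := hX
  refine ⟨1, one_pos, ?_⟩
  -- general membership lemma
  have mem : ∀ a c z : ℝ, (fun ω i => a * X ω i + c * max (Z ω - z) 0) ∈
      {X : Ω → Fin N → ℝ | Continuous X ∧ ∀ i, ∃ M : ℝ, ∀ ω, |X ω i| ≤ M * Z ω} := by
    intro a c z
    constructor
    · exact continuous_pi fun i =>
        (continuous_const.mul ((continuous_apply i).comp hXc)).add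
          (continuous_const.mul ((hZc.sub continuous_const).max continuous_const))
    · intro i
      obtain ⟨M, hM⟩ := hXb i
      refine ⟨|a| * M + |c| * (1 + |z|), fun ω => ?_⟩
      have hm0 : (0:ℝ) ≤ max (Z ω - z) 0 := le_max_right _ _
      have hmZ : max (Z ω - z) 0 ≤ (1 + |z|) * Z ω := by
        have h1 := hZ1 ω
        have h2 := neg_abs_le z
        have h3 := abs_nonneg z
        apply max_le
        · nlinarith
        · nlinarith
      calc |a * X ω i + c * max (Z ω - z) 0|
          ≤ |a * X ω i| + |c * max (Z ω - z) 0| := abs_add_le _ _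
        _ = |a| * |X ω i| + |c| * max (Z ω - z) 0 := by
            rw [abs_mul, abs_mul, abs_of_nonneg hm0]
        _ ≤ |a| * (M * Z ω) + |c| * ((1 + |z|) * Z ω) :=
            add_le_add (mul_le_mul_of_nonneg_left (hM ω) (abs_nonneg a))
              (mul_le_mul_of_nonneg_left hmZ (abs_nonneg c))
        _ = (|a| * M + |c| * (1 + |z|)) * Z ω := by ring
  have hXmem : ∀ a : ℝ, (fun ω (i : Fin N) => a * X ω i) ∈
      {X : Ω → Fin N → ℝ | Continuous X ∧ ∀ i, ∃ M : ℝ, ∀ ω, |X ω i| ≤ M * Z ω} := by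
    intro a
    have h := mem a 0 0
    have he : (fun ω i => a * X ω i + 0 * max (Z ω - 0) 0)
        = fun ω (i : Fin N) => a * X ω i := by
      funext ω i; ring
    rwa [he] at h
  have hMmem : ∀ (c z : ℝ), (fun (ω : Ω) (_ : Fin N) => c * max (Z ω - z) 0) ∈
      {X : Ω → Fin N → ℝ | Continuous X ∧ ∀ i, ∃ M : ℝ, ∀ ω, |X ω i| ≤ M * Z ω} := by
    intro c z
    have h := mem 0 c z
    have he : (fun ω i => 0 * X ω i + c * max (Z ω - z) 0)
        = fun (ω : Ω) (_ : Fin N) => c * max (Z ω - z) 0 := by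
      funext ω i; ring
    rwa [he] at h
  have hfmem : ∀ z : ℝ, (fun ω i => X ω i + 1 * max (Z ω - z) 0) ∈
      {X : Ω → Fin N → ℝ | Continuous X ∧ ∀ i, ∃ M : ℝ, ∀ ω, |X ω i| ≤ M * Z ω} := by
    intro z
    have h := mem 1 1 z
    have he : (fun ω i => 1 * X ω i + 1 * max (Z ω - z) 0)
        = fun ω i => X ω i + 1 * max (Z ω - z) 0 := by
      funext ω i; ring
    rwa [he] at h
  have hΨlb : ∀ z : ℝ, Ψ X ≤ Ψ (fun ω i => X ω i + 1 * max (Z ω - z) 0) := by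
    intro z
    refine hmono X ⟨hXc, hXb⟩ _ (hfmem z) fun ω => ?_
    intro i
    have hm0 : (0:ℝ) ≤ max (Z ω - z) 0 := le_max_right _ _
    simp only
    linarith
  rw [tendsto_order]
  constructor
  · intro b hb
    exact Eventually.of_forall fun z => lt_of_lt_of_le hb (hΨlb z)
  · intro b hb
    set δ := b - Ψ X with hδdef
    have hδ : 0 < δ := sub_pos.2 hb
    set C := Ψ (fun ω i => 2 * X ω i) + Ψ 0 - 2 * Ψ X with hC
    set D := |C| with hD
    have hD0 : 0 ≤ D := abs_nonneg C
    set u := min (1/2 : ℝ) (δ / (2 * (D + 1))) with hu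
    have hu0 : 0 < u := lt_min (by norm_num) (by positivity)
    have hu2 : u ≤ 1/2 := min_le_left _ _
    have huδ : u ≤ δ / (2 * (D + 1)) := min_le_right _ _
    set t := 1 - u with ht
    have h1t : 1 - t = u := by rw [ht]; ring
    have ht0 : (0:ℝ) < t := by rw [ht]; linarith
    have ht1 : t < 1 := by rw [ht]; linarith
    set s := 1 / t with hs
    have hts : t * s = 1 := by rw [hs]; field_simp
    have hs1 : 1 < s := (one_lt_div ht0).2 ht1
    have hs2 : s ≤ 2 := by rw [hs, div_le_iff₀ ht0]; linarith
    set lam := s - 1 with hlam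
    have hlam0 : 0 ≤ lam := by rw [hlam]; linarith
    have hlam1 : lam ≤ 1 := by rw [hlam]; linarith
    have hlam2 : t * lam = 1 - t := by rw [hlam, mul_sub, hts]; ring
    have hlam3 : t * (1 - lam) = 2 * t - 1 := by
      calc t * (1 - lam) = 2 * t - t * s := by rw [hlam]; ring
        _ = 2 * t - 1 := by rw [hts]
    set n := ⌈1 / u⌉₊ with hn
    have hn1 : 1 ≤ u * (n : ℝ) := by
      have h := Nat.le_ceil (1 / u)
      rw [← hn] at h
      calc (1:ℝ) = u * (1 / u) := by field_simp
        _ ≤ u * n := mul_le_mul_of_nonneg_left h hu0.le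
    -- convexity bound along the ray through X
    have hgs : Ψ (fun ω i => s * X ω i) ≤
        lam * Ψ (fun ω i => 2 * X ω i) + (1 - lam) * Ψ X := by
      have h : Ψ (fun ω i => lam * (2 * X ω i) + (1 - lam) * X ω i) ≤
          lam * Ψ (fun ω i => 2 * X ω i) + (1 - lam) * Ψ X :=
        hconv _ (hXmem 2) X ⟨hXc, hXb⟩ lam hlam0 hlam1
      have he : Ψ (fun ω i => s * X ω i)
          = Ψ (fun ω i => lam * (2 * X ω i) + (1 - lam) * X ω i) := by
        congr 1; funext ω i; rw [hlam]; ring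
      rw [he]; exact h
    have h5 : t * Ψ (fun ω i => s * X ω i) ≤
        (1 - t) * Ψ (fun ω i => 2 * X ω i) + (2 * t - 1) * Ψ X := by
      calc t * Ψ (fun ω i => s * X ω i)
          ≤ t * (lam * Ψ (fun ω i => 2 * X ω i) + (1 - lam) * Ψ X) :=
            mul_le_mul_of_nonneg_left hgs ht0.le
        _ = (t * lam) * Ψ (fun ω i => 2 * X ω i) + (t * (1 - lam)) * Ψ X := by ring
        _ = (1 - t) * Ψ (fun ω i => 2 * X ω i) + (2 * t - 1) * Ψ X := by
            rw [hlam2, hlam3]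
    have hev : ∀ᶠ z in atTop,
        Ψ (fun ω (_ : Fin N) => (n : ℝ) * max (Z ω - z) 0) < Ψ 0 + δ / (2 * u) :=
      (htail n).eventually_lt_const
        (show Ψ 0 < Ψ 0 + δ / (2 * u) by
          have h : (0:ℝ) < δ / (2 * u) := by positivity
          linarith)
    filter_upwards [hev] with z hz
    have hcomb_mem : (fun ω i => t * (s * X ω i) + (1 - t) * ((n : ℝ) * max (Z ω - z) 0)) ∈
        {X : Ω → Fin N → ℝ | Continuous X ∧ ∀ i, ∃ M : ℝ, ∀ ω, |X ω i| ≤ M * Z ω} := by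
      have h := mem (t * s) ((1 - t) * n) z
      have he : (fun ω i => (t * s) * X ω i + ((1 - t) * n) * max (Z ω - z) 0)
          = fun ω i => t * (s * X ω i) + (1 - t) * ((n : ℝ) * max (Z ω - z) 0) := by
        funext ω i; ring
      rwa [he] at h
    have h1 : Ψ (fun ω i => X ω i + 1 * max (Z ω - z) 0) ≤
        Ψ (fun ω i => t * (s * X ω i) + (1 - t) * ((n : ℝ) * max (Z ω - z) 0)) := by
      refine hmono _ (hfmem z) _ hcomb_mem fun ω => ?_
      intro i
      simp only
      have hm0 : (0:ℝ) ≤ max (Z ω - z) 0 := le_max_right _ _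
      have hx : t * (s * X ω i) = X ω i := by rw [← mul_assoc, hts, one_mul]
      have hmm : max (Z ω - z) 0 ≤ (1 - t) * ((n : ℝ) * max (Z ω - z) 0) := by
        have := mul_le_mul_of_nonneg_right hn1 hm0
        rw [h1t]
        nlinarith
      linarith [hx, hmm]
    have h2 : Ψ (fun ω i => t * (s * X ω i) + (1 - t) * ((n : ℝ) * max (Z ω - z) 0)) ≤
        t * Ψ (fun ω i => s * X ω i) +
          (1 - t) * Ψ (fun ω (_ : Fin N) => (n : ℝ) * max (Z ω - z) 0) :=
      hconv _ (hXmem s) _ (hMmem n z) t ht0.le ht1.le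
    have h3 : (1 - t) * Ψ (fun ω (_ : Fin N) => (n : ℝ) * max (Z ω - z) 0) <
        (1 - t) * (Ψ 0 + δ / (2 * u)) := by
      apply mul_lt_mul_of_pos_left hz
      linarith
    have h4 : (1 - t) * (Ψ 0 + δ / (2 * u)) = (1 - t) * Ψ 0 + δ / 2 := by
      rw [h1t]; field_simp
    have h6 : (1 - t) * C ≤ δ / 2 := by
      rw [h1t]
      have hCle : C ≤ D := le_abs_self C
      have hprod : u * (2 * (D + 1)) ≤ δ :=
        (le_div_iff₀ (by positivity : (0:ℝ) < 2 * (D + 1))).1 huδ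
      nlinarith [mul_le_mul_of_nonneg_left hCle hu0.le]
    rw [hC] at h6
    have h34 : (1 - t) * Ψ (fun ω (_ : Fin N) => (n : ℝ) * max (Z ω - z) 0) <
        (1 - t) * Ψ 0 + δ / 2 := h4 ▸ h3
    clear_value δ C D u t s lam n
    linarith [h1, h2, h34, h5, h6]
end

section
/- Let Ψ : C_Z → ℝ be an increasing convex functional, X ∈ C_Z fixed, and set Ψ_X(Y) := Ψ(X+Y) − Ψ(X). Suppose there exists ε > 0 with lim_{z→∞} Ψ(X + ε(Z−z)⁺·𝟏) = Ψ(X). Then for every sequence (X_n) in C_Z with X_n ↓ 0 pointwise, there exists η > 0 such that Ψ_X(η X_n) ↓ 0. -/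
open Filter Topology

set_option maxHeartbeats 1000000

/-- if Ψ is increasing and convex on C_Z and
`lim_{z→∞} Ψ(X + ε(Z−z)⁺·𝟏) = Ψ(X)` for some ε > 0, then for every sequence
(X_n) in C_Z with X_n ↓ 0 pointwise, there is η > 0 with Ψ_X(η X_n) ↓ 0,
where Ψ_X(Y) = Ψ(X+Y) − Ψ(X). -/
theorem stmt_8 {Ω : Type*} [MetricSpace Ω] [Nonempty Ω] {N : ℕ}
    (Z : Ω → ℝ) (hZc : Continuous Z) (hZ1 : ∀ ω, 1 ≤ Z ω)
    (hZcomp : ∀ z : ℝ, IsCompact {ω | Z ω ≤ z})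
    (CZ : Set (Ω → Fin N → ℝ))
    (hCZ : CZ = {X : Ω → Fin N → ℝ | Continuous X ∧ ∀ i, ∃ M : ℝ, ∀ ω, |X ω i| ≤ M * Z ω})
    (Ψ : (Ω → Fin N → ℝ) → ℝ)
    (hmono : ∀ X ∈ CZ, ∀ Y ∈ CZ, (∀ ω, X ω ≤ Y ω) → Ψ X ≤ Ψ Y)
    (hconv : ∀ X ∈ CZ, ∀ Y ∈ CZ, ∀ t : ℝ, 0 ≤ t → t ≤ 1 →
      Ψ (fun ω i => t * X ω i + (1 - t) * Y ω i) ≤ t * Ψ X + (1 - t) * Ψ Y)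
    (X : Ω → Fin N → ℝ) (hX : X ∈ CZ)
    (htail : ∃ ε > (0 : ℝ), Tendsto
      (fun z : ℝ => Ψ (fun ω i => X ω i + ε * max (Z ω - z) 0)) atTop (nhds (Ψ X)))
    (Xn : ℕ → (Ω → Fin N → ℝ)) (hXn : ∀ n, Xn n ∈ CZ)
    (hanti : ∀ ω i, Antitone (fun n => Xn n ω i))
    (hlim : ∀ ω i, Tendsto (fun n => Xn n ω i) atTop (nhds 0)) :
    ∃ η > (0 : ℝ),
      Antitone (fun n => Ψ (fun ω i => X ω i + η * Xn n ω i) - Ψ X) ∧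
      Tendsto (fun n => Ψ (fun ω i => X ω i + η * Xn n ω i) - Ψ X) atTop (nhds 0) := by
  subst hCZ
  obtain ⟨ε, hε, htail⟩ := htail
  have hZ0 : ∀ ω, 0 ≤ Z ω := fun ω => zero_le_one.trans (hZ1 ω)
  have hXnpos : ∀ n ω i, 0 ≤ Xn n ω i := fun n ω i =>
    le_of_tendsto (hlim ω i) (Filter.eventually_atTop.2 ⟨n, fun m hm => hanti ω i hm⟩)
  choose Mi hMi using (hXn 0).2
  set M : ℝ := 1 + ∑ i, |Mi i| with hMdef
  have hM1 : (1:ℝ) ≤ M := le_add_of_nonneg_right (Finset.sum_nonneg fun i _ => abs_nonneg _)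
  have hMpos : (0:ℝ) < M := zero_lt_one.trans_le hM1
  have hbound : ∀ n ω i, Xn n ω i ≤ M * Z ω := by
    intro n ω i
    have h1 : Xn n ω i ≤ Xn 0 ω i := hanti ω i (Nat.zero_le n)
    have h2 : Xn 0 ω i ≤ |Xn 0 ω i| := le_abs_self _
    have h3 := hMi i ω
    have h4 : Mi i ≤ M := by
      have h5 := Finset.single_le_sum (f := fun j => |Mi j|) (fun j _ => abs_nonneg _)
        (Finset.mem_univ i)
      have h6 := le_abs_self (Mi i)
      rw [hMdef]; linarith
    nlinarith [hZ0 ω]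
  set η := ε / (4 * M) with hηdef
  have hη : 0 < η := div_pos hε (by positivity)
  have hηM : η * M = ε / 4 := by rw [hηdef]; field_simp
  clear_value M η
  -- membership helpers
  have memAdd : ∀ f : Ω → ℝ, Continuous f → (∃ K, ∀ ω, |f ω| ≤ K * Z ω) →
      (fun ω i => X ω i + f ω) ∈
        {X : Ω → Fin N → ℝ | Continuous X ∧ ∀ i, ∃ M : ℝ, ∀ ω, |X ω i| ≤ M * Z ω} := by
    rintro f hf ⟨K, hK⟩
    refine ⟨continuous_pi fun i => ((continuous_apply i).comp hX.1).add hf, fun i => ?_⟩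
    obtain ⟨A, hA⟩ := hX.2 i
    refine ⟨|A| + K, fun ω => ?_⟩
    have h1 := abs_add_le (X ω i) (f ω)
    have h2 := hA ω; have h3 := hK ω
    have h4 := le_abs_self A; have h5 := abs_nonneg (X ω i)
    have h6 := hZ0 ω
    nlinarith
  have memXηn : ∀ n, (fun ω i => X ω i + η * Xn n ω i) ∈
      {X : Ω → Fin N → ℝ | Continuous X ∧ ∀ i, ∃ M : ℝ, ∀ ω, |X ω i| ≤ M * Z ω} := by
    intro n
    refine ⟨continuous_pi fun i => ((continuous_apply i).comp hX.1).add
      (continuous_const.mul ((continuous_apply i).comp (hXn n).1)), fun i => ?_⟩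
    obtain ⟨A, hA⟩ := hX.2 i
    obtain ⟨Bn, hBn⟩ := (hXn n).2 i
    refine ⟨|A| + η * |Bn|, fun ω => ?_⟩
    show |X ω i + η * Xn n ω i| ≤ (|A| + η * |Bn|) * Z ω
    have h1 := abs_add_le (X ω i) (η * Xn n ω i)
    have h2 := hA ω; have h3 := hBn ω
    have h4 := le_abs_self A; have h5 := le_abs_self Bn
    have h6 := hZ0 ω
    have h7 : |η * Xn n ω i| = η * |Xn n ω i| := by
      rw [abs_mul, abs_of_pos hη]
    nlinarith [abs_nonneg (Xn n ω i), hη.le, mul_nonneg (sub_nonneg.2 h4) h6,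
      mul_nonneg (mul_nonneg hη.le (sub_nonneg.2 h5)) h6,
      mul_le_mul_of_nonneg_left h3 hη.le]
  have hg0 : ∀ n, 0 ≤ Ψ (fun ω i => X ω i + η * Xn n ω i) - Ψ X := fun n =>
    sub_nonneg.2 (hmono X hX _ (memXηn n)
      (fun ω i => le_add_of_nonneg_right (mul_nonneg hη.le (hXnpos n ω i))))
  have hganti : Antitone (fun n => Ψ (fun ω i => X ω i + η * Xn n ω i) - Ψ X) := by
    intro a b hab
    have h := hmono _ (memXηn b) _ (memXηn a)
      (fun ω i => add_le_add_right (mul_le_mul_of_nonneg_left (hanti ω i hab) hη.le) _)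
    simpa using sub_le_sub_right h (Ψ X)
  -- the key smallness claim
  have key : ∀ δ : ℝ, 0 < δ → ∃ n₀, Ψ (fun ω i => X ω i + η * Xn n₀ ω i) ≤ Ψ X + δ := by
    intro δ hδ
    have memXε : (fun ω i => X ω i + ε) ∈
        {X : Ω → Fin N → ℝ | Continuous X ∧ ∀ i, ∃ M : ℝ, ∀ ω, |X ω i| ≤ M * Z ω} :=
      memAdd (fun _ => ε) continuous_const
        ⟨ε, fun ω => by rw [abs_of_pos hε]; nlinarith [hZ1 ω]⟩
    set B := Ψ (fun ω i => X ω i + ε) - Ψ X with hBdef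
    have hB0 : 0 ≤ B := sub_nonneg.2 (hmono X hX _ memXε fun ω i => le_add_of_nonneg_right hε.le)
    set c := min (ε/2) (ε * δ / (4 * (B + 1))) with hcdef
    have hc0 : 0 < c := lt_min (by positivity) (by positivity)
    have hcε : 2*c ≤ ε := by
      have := min_le_left (ε/2) (ε * δ / (4 * (B + 1))); rw [hcdef]; linarith
    have hcδ : c ≤ ε * δ / (4 * (B + 1)) := min_le_right _ _
    clear_value B c
    -- Ψ(X + 2c·1) ≤ Ψ X + δ
    have mem2c : (fun ω i => X ω i + 2*c) ∈
        {X : Ω → Fin N → ℝ | Continuous X ∧ ∀ i, ∃ M : ℝ, ∀ ω, |X ω i| ≤ M * Z ω} :=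
      memAdd (fun _ => 2*c) continuous_const
        ⟨2*c, fun ω => by rw [abs_of_pos (by linarith : (0:ℝ) < 2*c)]; nlinarith [hZ1 ω]⟩
    have hΨc : Ψ (fun ω i => X ω i + 2*c) ≤ Ψ X + δ := by
      set t := 2*c/ε with htdef
      have ht0 : 0 ≤ t := by positivity
      have ht1 : t ≤ 1 := by rw [htdef, div_le_one hε]; linarith
      have htε : t * ε = 2*c := by rw [htdef]; field_simp
      have h := hconv _ memXε X hX t ht0 ht1
      have heq : (fun ω i => t * ((fun ω i => X ω i + ε) ω i) + (1 - t) * X ω i)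
          = (fun ω i => X ω i + 2*c) := by
        funext ω i; simp only; linear_combination htε
      rw [heq] at h
      have htB : t * B ≤ δ := by
        have h8 : t * (B + 1) ≤ δ / 2 := by
          have hcδ' : c * (4 * (B + 1)) ≤ ε * δ := by
            rw [← le_div_iff₀ (by positivity)]; exact hcδ
          have h9 : t ≤ δ / (2 * (B + 1)) := by
            rw [htdef, div_le_div_iff₀ hε (by positivity)]
            nlinarith [hcδ']
          calc t * (B + 1) ≤ (δ / (2 * (B + 1))) * (B + 1) :=
                mul_le_mul_of_nonneg_right h9 (by linarith)
            _ = δ / 2 := by field_simp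
        nlinarith
      nlinarith [hB0]
    -- tail cutoff z
    have hzev : ∀ᶠ z in atTop,
        Ψ (fun ω i => X ω i + ε * max (Z ω - z) 0) ≤ Ψ X + δ :=
      htail.eventually (eventually_le_nhds (lt_add_of_pos_right _ hδ))
    obtain ⟨z, hz0, hzΨ⟩ := ((eventually_ge_atTop (0:ℝ)).and hzev).exists
    -- Dini-type compactness argument on {Z ≤ 2z}
    set U : ℕ → Set Ω := fun n => {ω | ∀ i, η * Xn n ω i < c} with hUdef
    have hUopen : ∀ n, IsOpen (U n) := by
      intro n
      have hrw : U n = ⋂ i, {ω | η * Xn n ω i < c} := by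
        ext ω; simp [hUdef]
      rw [hrw]
      exact isOpen_iInter_of_finite fun i =>
        isOpen_lt (continuous_const.mul ((continuous_apply i).comp (hXn n).1)) continuous_const
    have hUmono : ∀ m n : ℕ, m ≤ n → U m ⊆ U n := fun m n hmn ω hω i =>
      lt_of_le_of_lt (mul_le_mul_of_nonneg_left (hanti ω i hmn) hη.le) (hω i)
    have hcover : {ω | Z ω ≤ 2*z} ⊆ ⋃ n, U n := by
      intro ω _
      have hev : ∀ᶠ n in atTop, ∀ i, η * Xn n ω i < c := by
        rw [eventually_all]
        intro i
        have h := (hlim ω i).const_mul η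
        rw [mul_zero] at h
        exact h.eventually_lt_const hc0
      obtain ⟨n, hn⟩ := hev.exists
      exact Set.mem_iUnion.2 ⟨n, hn⟩
    obtain ⟨s, hs⟩ := (hZcomp (2*z)).elim_finite_subcover U hUopen hcover
    set n₀ := s.sup id with hn₀def
    refine ⟨n₀, ?_⟩
    have hKn₀ : ∀ ω, Z ω ≤ 2*z → ∀ i, η * Xn n₀ ω i < c := by
      intro ω hω
      obtain ⟨n, hn, hωn⟩ := Set.mem_iUnion₂.1 (hs hω)
      exact hUmono n n₀ (Finset.le_sup (f := id) hn) hωn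
    -- pointwise bound
    have hpt : ∀ ω (i : Fin N), X ω i + η * Xn n₀ ω i
        ≤ X ω i + (c + ε/2 * max (Z ω - z) 0) := by
      intro ω i
      rcases le_or_gt (Z ω) (2*z) with h | h
      · have h1 := hKn₀ ω h i
        have h2 : (0:ℝ) ≤ max (Z ω - z) 0 := le_max_right _ _
        nlinarith
      · have h1 : η * Xn n₀ ω i ≤ η * (M * Z ω) :=
          mul_le_mul_of_nonneg_left (hbound n₀ ω i) hη.le
        have h3 : Z ω - z ≤ max (Z ω - z) 0 := le_max_left _ _
        have h4 : η * (M * Z ω) = ε/4 * Z ω := by rw [← mul_assoc, hηM]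
        have h5 : ε/2 * (Z ω - z) ≤ ε/2 * max (Z ω - z) 0 :=
          mul_le_mul_of_nonneg_left h3 (by positivity)
        have h6 : 0 ≤ ε * (Z ω - 2*z) := mul_nonneg hε.le (by linarith)
        linarith
    have memG : (fun ω i => X ω i + (c + ε/2 * max (Z ω - z) 0)) ∈
        {X : Ω → Fin N → ℝ | Continuous X ∧ ∀ i, ∃ M : ℝ, ∀ ω, |X ω i| ≤ M * Z ω} := by
      refine memAdd (fun ω => c + ε/2 * max (Z ω - z) 0)
        (continuous_const.add (continuous_const.mul ((hZc.sub continuous_const).max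
          continuous_const))) ⟨c + ε/2, fun ω => ?_⟩
      have h1 : (0:ℝ) ≤ max (Z ω - z) 0 := le_max_right _ _
      have h2 : max (Z ω - z) 0 ≤ Z ω := max_le (by nlinarith [hZ0 ω]) (hZ0 ω)
      rw [abs_of_nonneg (by positivity)]
      nlinarith [hZ1 ω]
    have memT : (fun ω i => X ω i + ε * max (Z ω - z) 0) ∈
        {X : Ω → Fin N → ℝ | Continuous X ∧ ∀ i, ∃ M : ℝ, ∀ ω, |X ω i| ≤ M * Z ω} := by
      refine memAdd (fun ω => ε * max (Z ω - z) 0)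
        (continuous_const.mul ((hZc.sub continuous_const).max continuous_const))
        ⟨ε, fun ω => ?_⟩
      show |ε * max (Z ω - z) 0| ≤ ε * Z ω
      have h1 : (0:ℝ) ≤ max (Z ω - z) 0 := le_max_right _ _
      have h2 : max (Z ω - z) 0 ≤ Z ω := max_le (by nlinarith [hZ0 ω]) (hZ0 ω)
      rw [abs_of_nonneg (by positivity)]
      nlinarith [mul_nonneg hε.le (sub_nonneg.2 h2)]
    calc Ψ (fun ω i => X ω i + η * Xn n₀ ω i)
        ≤ Ψ (fun ω i => X ω i + (c + ε/2 * max (Z ω - z) 0)) :=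
          hmono _ (memXηn n₀) _ memG fun ω i => hpt ω i
      _ = Ψ (fun ω i => (1/2 : ℝ) * ((fun ω i => X ω i + 2*c) ω i)
            + (1 - 1/2) * ((fun ω i => X ω i + ε * max (Z ω - z) 0) ω i)) := by
          congr 1; funext ω i; simp only; ring
      _ ≤ (1/2 : ℝ) * Ψ (fun ω i => X ω i + 2*c)
            + (1 - 1/2) * Ψ (fun ω i => X ω i + ε * max (Z ω - z) 0) :=
          hconv _ mem2c _ memT (1/2) (by norm_num) (by norm_num)
      _ ≤ Ψ X + δ := by nlinarith [hΨc, hzΨ]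
  refine ⟨η, hη, hganti, ?_⟩
  rw [Metric.tendsto_atTop]
  intro δ hδ
  obtain ⟨n₀, hn₀⟩ := key (δ/2) (half_pos hδ)
  refine ⟨n₀, fun n hn => ?_⟩
  have h1 := hganti hn
  have h2 := hg0 n
  rw [Real.dist_eq, sub_zero, abs_of_nonneg h2]
  simp only at h1
  linarith
end

section
/- Suppose the dual representation holds: ρ is real valued on B_Z, ρ(0) = γ, and ρ(X) = max over Q = (Q₁,…,Q_N) ∈ P_Z of (∑ᵢ E^{Qᵢ}[−Xⁱ] − ρ*(−Q)) for all X ∈ C_Z. Then there exists Q ∈ P_Z such that ∑ᵢ E^{Qᵢ}[Xⁱ] − γ ≥ 0 for all X ∈ C_Z satisfying Λ∘(X+g) ∈ A for some g ∈ G. -/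
open MeasureTheory Filter Topology
open scoped BigOperators

variable {Ω : Type*} [MeasurableSpace Ω] {N : ℕ}

/-- The robust market-adjusted systemic risk measure
`ρ(X) = inf { ∑ᵢ mⁱ | m ∈ ℝ^N, ∃ g ∈ G, Λ∘(m+X+g) ∈ A }`, `inf ∅ = +∞`. -/
noncomputable def rho (A : Set (Ω → ℝ)) (G : Set (Ω → Fin N → ℝ))
    (Λ : (Fin N → ℝ) → ℝ) (X : Ω → Fin N → ℝ) : EReal :=
  sInf ((fun m : Fin N → ℝ => ((∑ i, m i : ℝ) : EReal)) ''
    {m | ∃ g ∈ G, (fun ω => Λ (fun i => m i + X ω i + g ω i)) ∈ A})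

/-- `P_Z`: N-tuples of Borel probability measures integrating Z. -/
def memPZ (Z : Ω → ℝ) (Q : Fin N → Measure Ω) : Prop :=
  (∀ i, IsProbabilityMeasure (Q i)) ∧ ∀ i, Integrable Z (Q i)

/-- The penalty `ρ*(−Q) = sup_{X ∈ C_Z} (∑ᵢ E^{Qᵢ}[−Xⁱ] − ρ(X))`. -/
noncomputable def rhoStarNeg (A : Set (Ω → ℝ)) (G : Set (Ω → Fin N → ℝ))
    (Λ : (Fin N → ℝ) → ℝ) (CZ : Set (Ω → Fin N → ℝ)) (Q : Fin N → Measure Ω) : EReal :=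
  ⨆ X ∈ CZ, (((∑ i, ∫ ω, -X ω i ∂(Q i) : ℝ) : EReal) - rho A G Λ X)

/-- if the dual representation holds (ρ real valued on B_Z, ρ(0) = γ and
`ρ(X) = max_{Q ∈ P_Z} (∑ᵢ E^{Qᵢ}[−Xⁱ] − ρ*(−Q))` on C_Z), then there exists Q ∈ P_Z with
`∑ᵢ E^{Qᵢ}[Xⁱ] − γ ≥ 0` for all X ∈ C_Z acceptable after adding some g ∈ G. -/
theorem stmt_12 [MetricSpace Ω] [BorelSpace Ω] [Nonempty Ω]
    (Z : Ω → ℝ) (hZc : Continuous Z) (hZ1 : ∀ ω, 1 ≤ Z ω)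
    (hZcomp : ∀ z : ℝ, IsCompact {ω | Z ω ≤ z})
    (A : Set (Ω → ℝ)) (G : Set (Ω → Fin N → ℝ))
    (hAmono : ∀ x y : Ω → ℝ, y ∈ A → (∀ ω, y ω ≤ x ω) → x ∈ A)
    (h0A : (0 : Ω → ℝ) ∈ A) (h0G : (0 : Ω → Fin N → ℝ) ∈ G)
    (Λ : (Fin N → ℝ) → ℝ) (hΛmono : Monotone Λ)
    (hΛconc : ConcaveOn ℝ Set.univ Λ) (hΛ0 : Λ 0 = 0)
    (hCconv : Convex ℝ {X : Ω → Fin N → ℝ | ∃ g ∈ G, (fun ω => Λ (X ω + g ω)) ∈ A})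
    (CZ : Set (Ω → Fin N → ℝ))
    (hCZ : CZ = {X : Ω → Fin N → ℝ | Continuous X ∧ ∀ i, ∃ M : ℝ, ∀ ω, |X ω i| ≤ M * Z ω})
    (BZ : Set (Ω → Fin N → ℝ))
    (hBZ : BZ = {X : Ω → Fin N → ℝ | Measurable X ∧ ∀ i, ∃ M : ℝ, ∀ ω, |X ω i| ≤ M * Z ω})
    (γ : ℝ) (hγ : γ ≤ 0)
    (hreal : ∀ X ∈ BZ, rho A G Λ X ≠ ⊤ ∧ rho A G Λ X ≠ ⊥)
    (hrho0 : rho A G Λ 0 = (γ : EReal))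
    (hdual : ∀ X ∈ CZ,
      (∀ Q : Fin N → Measure Ω, memPZ Z Q →
        ((∑ i, ∫ ω, -X ω i ∂(Q i) : ℝ) : EReal) - rhoStarNeg A G Λ CZ Q ≤ rho A G Λ X) ∧
      (∃ Q : Fin N → Measure Ω, memPZ Z Q ∧
        rho A G Λ X = ((∑ i, ∫ ω, -X ω i ∂(Q i) : ℝ) : EReal) - rhoStarNeg A G Λ CZ Q)) :
    ∃ Q : Fin N → Measure Ω, memPZ Z Q ∧
      ∀ X ∈ CZ, (∃ g ∈ G, (fun ω => Λ (fun i => X ω i + g ω i)) ∈ A) →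
        0 ≤ (∑ i, ∫ ω, X ω i ∂(Q i)) - γ := by
  have h0CZ : (0 : Ω → Fin N → ℝ) ∈ CZ := by
    rw [hCZ]
    refine ⟨continuous_const, fun i => ⟨0, fun ω => by simp⟩⟩
  obtain ⟨Q, hQ, heq⟩ := (hdual 0 h0CZ).2
  refine ⟨Q, hQ, fun X hX hacc => ?_⟩
  -- compute rhoStarNeg
  have hsum0 : (∑ i, ∫ ω, -(0 : Ω → Fin N → ℝ) ω i ∂(Q i) : ℝ) = 0 := by simp
  rw [hrho0, hsum0] at heq
  have hr : rhoStarNeg A G Λ CZ Q = ((-γ : ℝ) : EReal) := by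
    generalize hrg : rhoStarNeg A G Λ CZ Q = r at heq ⊢
    induction r using EReal.rec with
    | bot =>
      rw [EReal.coe_sub_bot] at heq
      exact absurd heq (EReal.coe_ne_top γ)
    | coe a =>
      norm_cast at heq ⊢
      linarith
    | top =>
      rw [EReal.sub_top] at heq
      exact absurd heq (EReal.coe_ne_bot γ)
  -- rho X ≤ 0
  have hrhoX : rho A G Λ X ≤ 0 := by
    have hmem : ((0:ℝ) : EReal) ∈ ((fun m : Fin N → ℝ => ((∑ i, m i : ℝ) : EReal)) ''
        {m | ∃ g ∈ G, (fun ω => Λ (fun i => m i + X ω i + g ω i)) ∈ A}) := by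
      obtain ⟨g, hg, hA⟩ := hacc
      refine ⟨0, ⟨g, hg, ?_⟩, by simp⟩
      simpa using hA
    unfold rho
    simpa using sInf_le hmem
  have hle := (hdual X hX).1 Q hQ
  rw [hr] at hle
  have hle2 : (((∑ i, ∫ ω, -X ω i ∂(Q i) : ℝ) : EReal)) - ((-γ : ℝ) : EReal) ≤ (0 : EReal) :=
    hle.trans hrhoX
  rw [← EReal.coe_sub] at hle2
  have hle3 : (∑ i, ∫ ω, -X ω i ∂(Q i) : ℝ) - (-γ) ≤ 0 := by exact_mod_cast hle2
  have hneg : (∑ i, ∫ ω, -X ω i ∂(Q i) : ℝ) = -(∑ i, ∫ ω, X ω i ∂(Q i)) := by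
    simp [integral_neg]
  rw [hneg] at hle3
  linarith
end
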